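/- Let (X,d) be a complete metric space, let f : X → (−∞,∞] be lower semicontinuous, and let x̄ be a point with f(x̄) finite at which the slope is zero: |∇f|(x̄) = 0. Let M be an identifiable set for f at x̄. Then the quadratic growth rates of f around x̄ with and without restriction to M coincide: liminf_{x → x̄, x ≠ x̄} (f(x) − f(x̄))/d(x,x̄)² = liminf_{x → x̄, x ∈ M, x ≠ x̄} (f(x) − f(x̄))/d(x,x̄)². In particular, f has quadratic growth around x̄ if and only if it has quadratic growth around x̄ relative to M. -/

import Mathlib

open Filter Topology
open scoped ENNReal NNReal
set_option maxHeartbeats 2000000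

/-- The slope `|∇f|(x)`: the infimum of all `δ > 0` such that `x` is a local minimizer of
`f + δ·d(·,x)`; it equals `∞` at points where `f x = ⊤`. -/
noncomputable def slopeM {X : Type*} [MetricSpace X] (f : X → EReal) (x : X) : ℝ≥0∞ :=
  if f x = ⊤ then ⊤
  else sInf {δ : ℝ≥0∞ | ∃ c : ℝ, 0 < c ∧ δ = ENNReal.ofReal c ∧
    ∀ᶠ z in 𝓝 x, f x ≤ f z + ((c * dist z x : ℝ) : EReal)}

/-- The modulus of identifiability: `liminf_{x → xbar, x ∉ M, f(x) → f(xbar)} |∇f|(x)`. -/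
noncomputable def identModulus {X : Type*} [MetricSpace X] (f : X → EReal) (M : Set X)
    (xbar : X) : ℝ≥0∞ :=
  Filter.liminf (slopeM f) (𝓝[Mᶜ] xbar ⊓ Filter.comap f (𝓝 (f xbar)))

/-- `M` is an identifiable set for `f` at `xbar`: it is closed, contains `xbar`, and the
modulus of identifiability is strictly positive. -/
def Identifiable {X : Type*} [MetricSpace X] (f : X → EReal) (M : Set X) (xbar : X) : Prop :=
  IsClosed M ∧ xbar ∈ M ∧ 0 < identModulus f M xbar

section helpers

lemma slopeM_le {X : Type*} [MetricSpace X] {f : X → EReal} {y : X} (hy : f y ≠ ⊤)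
    {ε : ℝ} (hε : 0 < ε) (h : ∀ᶠ z in 𝓝 y, f y ≤ f z + ((ε * dist z y : ℝ) : EReal)) :
    slopeM f y ≤ ENNReal.ofReal ε := by
  rw [slopeM, if_neg hy]
  exact sInf_le ⟨ε, hε, rfl, h⟩

lemma slopeM_zero_low {X : Type*} [MetricSpace X] {f : X → EReal} {x : X} (hx : f x ≠ ⊤)
    (h0 : slopeM f x = 0) {c : ℝ} (hc : 0 < c) :
    ∀ᶠ z in 𝓝 x, f x ≤ f z + ((c * dist z x : ℝ) : EReal) := by
  rw [slopeM, if_neg hx] at h0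
  have : sInf {δ : ℝ≥0∞ | ∃ c : ℝ, 0 < c ∧ δ = ENNReal.ofReal c ∧
      ∀ᶠ z in 𝓝 x, f x ≤ f z + ((c * dist z x : ℝ) : EReal)} < ENNReal.ofReal c := by
    rw [h0]; exact ENNReal.ofReal_pos.mpr hc
  obtain ⟨δ, ⟨c₀, hc₀, rfl, hev⟩, hlt⟩ := sInf_lt_iff.mp this
  have hc₀c : c₀ ≤ c := le_of_lt ((ENNReal.ofReal_lt_ofReal_iff hc).mp hlt)
  refine hev.mono fun z hz => hz.trans (add_le_add_right ?_ _)
  exact EReal.coe_le_coe_iff.mpr (mul_le_mul_of_nonneg_right hc₀c dist_nonneg)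

lemma ekeland_step {Y : Type*} [MetricSpace Y] (f : Y → EReal) (m : ℝ)
    (hm : ∀ z, (m : EReal) ≤ f z) (ε : ℝ) (n : ℕ) (w : Y) (hw : f w ≠ ⊤) :
    ∃ w', (f w' + ((ε * dist w' w : ℝ) : EReal) ≤ f w) ∧
      ∀ z, f z + ((ε * dist z w : ℝ) : EReal) ≤ f w → f w' ≤ f z + (((1/2)^n : ℝ) : EReal) := by
  set S : Set Y := {v | f v + ((ε * dist v w : ℝ) : EReal) ≤ f w} with hS
  have hwS : w ∈ S := by simp [hS]
  set I : EReal := sInf (f '' S) with hI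
  have hIm : (m : EReal) ≤ I := le_sInf (by rintro _ ⟨v, -, rfl⟩; exact hm v)
  have hIw : I ≤ f w := sInf_le ⟨w, hwS, rfl⟩
  have hInt : I ≠ ⊤ := fun h => hw (top_le_iff.mp (h ▸ hIw))
  have hInb : I ≠ ⊥ := fun h => by simp [h] at hIm
  have hIc : I = ((I.toReal : ℝ) : EReal) := (EReal.coe_toReal hInt hInb).symm
  have hlt : I < ((I.toReal + (1/2)^n : ℝ) : EReal) := by
    rw [hIc]
    exact_mod_cast lt_add_of_pos_right _ (by positivity)
  obtain ⟨-, ⟨w', hw'S, rfl⟩, hw'lt⟩ := sInf_lt_iff.mp hlt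
  refine ⟨w', hw'S, fun z hzS => ?_⟩
  have hIz : I ≤ f z := sInf_le ⟨z, hzS, rfl⟩
  calc f w' ≤ ((I.toReal + (1/2)^n : ℝ) : EReal) := le_of_lt hw'lt
    _ = ((I.toReal : ℝ) : EReal) + (((1/2)^n : ℝ) : EReal) := by rw [← EReal.coe_add]
    _ ≤ f z + (((1/2)^n : ℝ) : EReal) := add_le_add_left (hIc ▸ hIz) _

lemma ekeland {Y : Type*} [MetricSpace Y] [CompleteSpace Y]
    (f : Y → EReal) (hlsc : LowerSemicontinuous f) (m : ℝ) (hm : ∀ z, (m : EReal) ≤ f z)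
    (ε : ℝ) (hε : 0 < ε) (x : Y) (hx : f x ≠ ⊤) :
    ∃ y : Y, f y + ((ε * dist y x : ℝ) : EReal) ≤ f x ∧
      ∀ z : Y, f y ≤ f z + ((ε * dist z y : ℝ) : EReal) := by
  choose! next h1 h2 using ekeland_step f m hm ε
  set u : ℕ → Y := fun n => Nat.rec x (fun k w => next k w) n with hu
  have hu0 : u 0 = x := rfl
  have husucc : ∀ n, u (n + 1) = next n (u n) := fun n => rfl
  have hnb : ∀ z, f z ≠ ⊥ := fun z h => by simpa [h] using hm z
  have hne : ∀ n, f (u n) ≠ ⊤ := by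
    intro n
    induction n with
    | zero => exact hx
    | succ k ih =>
      intro h
      have hthis := h1 k (u k) ih
      rw [← husucc k] at hthis
      rw [h, EReal.top_add_coe, top_le_iff] at hthis
      exact ih hthis
  set rn : ℕ → ℝ := fun n => (f (u n)).toReal with hrn
  have hre : ∀ n, f (u n) = ((rn n : ℝ) : EReal) := fun n =>
    (EReal.coe_toReal (hne n) (hnb _)).symm
  have hstep : ∀ n, rn (n+1) + ε * dist (u (n+1)) (u n) ≤ rn n := by
    intro n
    have hthis := h1 n (u n) (hne n)
    rw [← husucc n, hre (n+1), hre n, ← EReal.coe_add] at hthis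
    exact_mod_cast hthis
  have hmr : ∀ n, m ≤ rn n := fun n => by
    have := hm (u n); rw [hre n] at this; exact_mod_cast this
  have hchain : ∀ n k, rn (n+k) + ε * dist (u (n+k)) (u n) ≤ rn n := by
    intro n k
    induction k with
    | zero => simp
    | succ j ih =>
      have h1' := hstep (n+j)
      have htri : dist (u (n+j+1)) (u n) ≤ dist (u (n+j+1)) (u (n+j)) + dist (u (n+j)) (u n) :=
        dist_triangle _ _ _
      have hd : (0:ℝ) ≤ dist (u (n+j)) (u n) := dist_nonneg
      show rn (n+j+1) + ε * dist (u (n+j+1)) (u n) ≤ rn n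
      nlinarith [dist_nonneg (x := u (n+j+1)) (y := u (n+j))]
  have hanti : Antitone rn := antitone_nat_of_succ_le fun n => by
    have := hstep n; nlinarith [dist_nonneg (x := u (n+1)) (y := u n)]
  have hbdd : BddBelow (Set.range rn) := ⟨m, by rintro _ ⟨n, rfl⟩; exact hmr n⟩
  set L : ℝ := ⨅ n, rn n with hL
  have hLt : Tendsto rn atTop (𝓝 L) := tendsto_atTop_ciInf hanti hbdd
  have hLle : ∀ n, L ≤ rn n := fun n => ciInf_le hbdd n
  have hcauchy : CauchySeq u := by
    apply cauchySeq_of_le_tendsto_0 (fun N => (rn N - L) / ε)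
    · intro n k N hn hk
      wlog hnk : n ≤ k generalizing n k
      · rw [dist_comm]; exact this k n hk hn (le_of_not_ge hnk)
      obtain ⟨j, rfl⟩ := le_iff_exists_add.mp hnk
      have hc := hchain n j
      have h1' := hanti hn
      have h2' := hLle (n+j)
      rw [dist_comm, le_div_iff₀ hε]
      nlinarith
    · have : Tendsto (fun N => rn N - L) atTop (𝓝 (L - L)) := hLt.sub tendsto_const_nhds
      simpa using this.div_const ε
  obtain ⟨y, hy⟩ := cauchySeq_tendsto_of_complete hcauchy
  have hfyL : f y ≤ ((L : ℝ) : EReal) := by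
    by_contra hcon
    push_neg at hcon
    obtain ⟨c, hc1, hc2⟩ := EReal.exists_between_coe_real hcon
    have hev : ∀ᶠ n in atTop, (c : EReal) < f (u n) :=
      hy.eventually (hlsc y (c : EReal) hc2)
    have hev2 : ∀ᶠ n in atTop, rn n < c :=
      hLt.eventually (eventually_lt_nhds (by exact_mod_cast hc1))
    obtain ⟨n, h1', h2'⟩ := (hev.and hev2).exists
    rw [hre n] at h1'
    exact absurd (EReal.coe_lt_coe_iff.mp h1') (not_lt.mpr (le_of_lt h2'))
  have hfynt : f y ≠ ⊤ := fun h => by simp [h] at hfyL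
  have hyS : ∀ n, f y + ((ε * dist y (u n) : ℝ) : EReal) ≤ f (u n) := by
    intro n
    have hreal : L + ε * dist y (u n) ≤ rn n := by
      have htt : Tendsto (fun k => rn (n+k) + ε * dist (u (n+k)) (u n)) atTop
          (𝓝 (L + ε * dist y (u n))) := by
        apply Tendsto.add
        · exact hLt.comp ((tendsto_add_atTop_nat n).congr fun a => add_comm a n)
        · exact tendsto_const_nhds.mul
            (Tendsto.dist (hy.comp ((tendsto_add_atTop_nat n).congr fun a => add_comm a n))
              (tendsto_const_nhds (x := u n)))
      exact le_of_tendsto htt (Eventually.of_forall fun k => hchain n k)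
    calc f y + ((ε * dist y (u n) : ℝ) : EReal)
        ≤ ((L : ℝ) : EReal) + ((ε * dist y (u n) : ℝ) : EReal) := add_le_add_left hfyL _
      _ = ((L + ε * dist y (u n) : ℝ) : EReal) := by rw [← EReal.coe_add]
      _ ≤ ((rn n : ℝ) : EReal) := EReal.coe_le_coe_iff.mpr hreal
      _ = f (u n) := (hre n).symm
  refine ⟨y, by simpa [hu0] using hyS 0, ?_⟩
  intro z
  by_contra hcon
  push_neg at hcon
  have hznt : f z ≠ ⊤ := by
    intro h
    rw [h, EReal.top_add_coe] at hcon
    exact (not_top_lt hcon)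
  have hty : f y = (((f y).toReal : ℝ) : EReal) := (EReal.coe_toReal hfynt (hnb y)).symm
  have htz : f z = (((f z).toReal : ℝ) : EReal) := (EReal.coe_toReal hznt (hnb z)).symm
  set ty := (f y).toReal
  set tz := (f z).toReal
  have hreal : tz + ε * dist z y < ty := by
    rw [hty, htz, ← EReal.coe_add] at hcon
    exact_mod_cast hcon
  have hzS : ∀ n, f z + ((ε * dist z (u n) : ℝ) : EReal) ≤ f (u n) := by
    intro n
    have hyn := hyS n
    rw [hty, hre n, ← EReal.coe_add] at hyn
    have hyn' : ty + ε * dist y (u n) ≤ rn n := by exact_mod_cast hyn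
    have htri : dist z (u n) ≤ dist z y + dist y (u n) := dist_triangle _ _ _
    rw [htz, hre n, ← EReal.coe_add]
    apply EReal.coe_le_coe_iff.mpr
    nlinarith
  have hkey : ∀ n, ty ≤ tz + (1/2)^n := by
    intro n
    have hn2 := h2 n (u n) (hne n) z (hzS n)
    rw [← husucc n] at hn2
    have hyn1 := hyS (n+1)
    have hle : f y ≤ f (u (n+1)) := by
      refine le_trans (le_add_of_nonneg_right ?_) hyn1
      exact_mod_cast mul_nonneg (le_of_lt hε) dist_nonneg
    have := hle.trans hn2
    rw [hty, htz, ← EReal.coe_add] at this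
    exact_mod_cast this
  have hlim : Tendsto (fun n : ℕ => tz + (1/2 : ℝ)^n) atTop (𝓝 tz) := by
    simpa using (tendsto_const_nhds (x := tz)).add
      (tendsto_pow_atTop_nhds_zero_of_lt_one (r := (1/2:ℝ)) (by norm_num) (by norm_num))
  have : ty ≤ tz := ge_of_tendsto hlim (Eventually.of_forall hkey)
  nlinarith [dist_nonneg (x := z) (y := y)]

end helpers

/-- Quadratic growth: the quadratic growth rates of `f` around `xbar`, with and without
restriction to an identifiable set `M`, coincide; in particular `f` has quadratic growth
around `xbar` if and only if it has quadratic growth around `xbar` relative to `M`. -/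
theorem quadratic_growth_identifiable {X : Type*} [MetricSpace X] [CompleteSpace X]
    (f : X → EReal) (hlsc : LowerSemicontinuous f) (hbot : ∀ z, f z ≠ ⊥)
    (xbar : X) (hfin : f xbar ≠ ⊤) (hslope : slopeM f xbar = 0)
    (M : Set X) (hM : Identifiable f M xbar) :
    (Filter.liminf (fun z => (f z - f xbar) * (((dist z xbar ^ 2)⁻¹ : ℝ) : EReal))
        (𝓝[≠] xbar)
      = Filter.liminf (fun z => (f z - f xbar) * (((dist z xbar ^ 2)⁻¹ : ℝ) : EReal))
        (𝓝[M \ {xbar}] xbar)) ∧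
    ((∃ γ : ℝ, 0 < γ ∧ ∀ᶠ z in 𝓝 xbar, f xbar + ((γ * dist z xbar ^ 2 : ℝ) : EReal) ≤ f z) ↔
      (∃ γ : ℝ, 0 < γ ∧ ∀ᶠ z in 𝓝[M] xbar, f xbar + ((γ * dist z xbar ^ 2 : ℝ) : EReal) ≤ f z)) := by
  obtain ⟨hMcl, hxbM, hmod⟩ := hM
  have hbx := hbot xbar
  set rfx : ℝ := (f xbar).toReal with hrfx
  have hfx : f xbar = ((rfx : ℝ) : EReal) := (EReal.coe_toReal hfin hbx).symm
  set Q : X → EReal := fun z => (f z - f xbar) * (((dist z xbar ^ 2)⁻¹ : ℝ) : EReal) with hQdef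
  -- Q at finite points
  have hQreal : ∀ z (t : ℝ), z ≠ xbar → f z = (t : EReal) →
      Q z = (((t - rfx) * (dist z xbar ^ 2)⁻¹ : ℝ) : EReal) := by
    intro z t hz hft
    rw [hQdef]
    simp only [hft, hfx, ← EReal.coe_sub, ← EReal.coe_mul]
  have hQtop : ∀ z, z ≠ xbar → f z = ⊤ → Q z = ⊤ := by
    intro z hz hft
    have hdz : (0:ℝ) < (dist z xbar ^ 2)⁻¹ := inv_pos.mpr (pow_pos (dist_pos.mpr hz) 2)
    rw [hQdef]
    simp only [hft, hfx, EReal.top_sub_coe]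
    exact EReal.top_mul_coe_of_pos hdz
  -- identifiability data
  obtain ⟨ε₀nn, hε₀pos, hε₀lt⟩ := ENNReal.lt_iff_exists_nnreal_btwn.mp hmod
  have hε₀ : (0:ℝ) < (ε₀nn : ℝ) := by exact_mod_cast ENNReal.coe_pos.mp hε₀pos
  have hev : ∀ᶠ z in (𝓝[Mᶜ] xbar ⊓ Filter.comap f (𝓝 (f xbar))),
      (ε₀nn : ℝ≥0∞) < slopeM f z := eventually_lt_of_lt_liminf hε₀lt
  rw [Filter.eventually_iff, Filter.mem_inf_iff_superset] at hev
  obtain ⟨s, hs, t, ht, hst⟩ := hev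
  obtain ⟨r₀, hr₀, hr₀sub⟩ := Metric.mem_nhdsWithin_iff.mp hs
  obtain ⟨V, hV, hVsub⟩ := Filter.mem_comap.mp ht
  rw [hfx, EReal.nhds_coe, Filter.mem_map] at hV
  obtain ⟨η, hη, hηsub⟩ := Metric.mem_nhds_iff.mp hV
  have hident : ∀ z (tv : ℝ), z ∉ M → dist z xbar < r₀ → f z = (tv : EReal) →
      |tv - rfx| < η → (ε₀nn : ℝ≥0∞) < slopeM f z := by
    intro z tv hzM hzd hfz htv
    apply hst
    refine ⟨hr₀sub ⟨Metric.mem_ball.mpr hzd, hzM⟩, hVsub ?_⟩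
    show f z ∈ V
    rw [hfz]
    exact hηsub (by rwa [Metric.mem_ball, Real.dist_eq])
  -- the key frequently claim
  have key : ∀ K : ℝ, Filter.liminf Q (𝓝[≠] xbar) < (K : EReal) →
      ∃ᶠ z in 𝓝[M \ {xbar}] xbar, Q z ≤ (K : EReal) := by
    intro K hK
    obtain ⟨K₀, hK₀1, hK₀2'⟩ := EReal.exists_between_coe_real hK
    have hK₀2 : K₀ < K := EReal.coe_lt_coe_iff.mp hK₀2'
    have hfreq : ∃ᶠ z in 𝓝[≠] xbar, Q z < (K₀ : EReal) := frequently_lt_of_liminf_lt (h := hK₀1)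
    -- choose θ
    have hKabs : (0:ℝ) < |K| + 1 := by positivity
    obtain ⟨θ, hθ0, hθhalf, hθ1, hθ2⟩ :
        ∃ θ:ℝ, 0 < θ ∧ θ < 1/2 ∧ K₀ ≤ K*(1-θ)^2 ∧ K₀ ≤ K*(1+θ)^2 := by
      have hd : 0 < K - K₀ := sub_pos.mpr hK₀2
      refine ⟨min (1/4) ((K - K₀)/(4*(|K|+1))), by positivity,
        lt_of_le_of_lt (min_le_left _ _) (by norm_num), ?_, ?_⟩
      · set θ := min (1/4) ((K - K₀)/(4*(|K|+1))) with hθd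
        have h1 : θ ≤ (K-K₀)/(4*(|K|+1)) := min_le_right _ _
        have h2 : θ ≤ 1/4 := min_le_left _ _
        have h3 : 0 < θ := by positivity
        have h4 : θ * (4*(|K|+1)) ≤ K - K₀ := by
          rw [← le_div_iff₀ (by positivity)]; exact h1
        have p1 : (-(|K|))*θ ≤ K * θ := mul_le_mul_of_nonneg_right (neg_abs_le K) h3.le
        have p2 : |K| * θ ≤ |K| * (1/4) := mul_le_mul_of_nonneg_left h2 (abs_nonneg K)
        have q : (0:ℝ) ≤ K * θ - 2 * K + 4 * |K| + 4 := by
          linarith only [p1, p2, le_abs_self K, abs_nonneg K]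
        have q2 : (0:ℝ) ≤ θ * (K * θ - 2 * K + 4 * |K| + 4) := mul_nonneg h3.le q
        nlinarith only [h4, q2]
      · set θ := min (1/4) ((K - K₀)/(4*(|K|+1))) with hθd
        have h1 : θ ≤ (K-K₀)/(4*(|K|+1)) := min_le_right _ _
        have h2 : θ ≤ 1/4 := min_le_left _ _
        have h3 : 0 < θ := by positivity
        have h4 : θ * (4*(|K|+1)) ≤ K - K₀ := by
          rw [← le_div_iff₀ (by positivity)]; exact h1
        have p1 : (-(|K|))*θ ≤ K * θ := mul_le_mul_of_nonneg_right (neg_abs_le K) h3.le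
        have p2 : |K| * θ ≤ |K| * (1/4) := mul_le_mul_of_nonneg_left h2 (abs_nonneg K)
        have q : (0:ℝ) ≤ K * θ + 2 * K + 4 * |K| + 4 := by
          linarith only [p1, p2, le_abs_self K, neg_abs_le K, abs_nonneg K]
        have q2 : (0:ℝ) ≤ θ * (K * θ + 2 * K + 4 * |K| + 4) := mul_nonneg h3.le q
        nlinarith only [h4, q2]
    set ε : ℝ := (ε₀nn : ℝ)/2 with hεd
    have hε : 0 < ε := by positivity
    have hεlt : ENNReal.ofReal ε < (ε₀nn : ℝ≥0∞) := by
      rw [← ENNReal.ofReal_coe_nnreal]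
      exact (ENNReal.ofReal_lt_ofReal_iff hε₀).mpr (half_lt_self hε₀)
    set c : ℝ := min (ε/2) (ε*θ/4) with hcd
    have hc : 0 < c := lt_min (by positivity) (by positivity)
    have hcε2 : c ≤ ε/2 := min_le_left _ _
    have hcεθ : c ≤ ε*θ/4 := min_le_right _ _
    obtain ⟨r₁, hr₁, hlow⟩ := Metric.eventually_nhds_iff.mp (slopeM_zero_low hfin hslope hc)
    clear_value ε c
    set R : ℝ := r₁/2 with hRd
    have hR : 0 < R := by positivity
    rw [frequently_nhdsWithin_iff, Filter.frequently_iff]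
    intro U hU
    obtain ⟨ρ, hρ, hballU⟩ := Metric.mem_nhds_iff.mp hU
    have hK₀abs : (0:ℝ) < |K₀| + 1 := by positivity
    set dm : ℝ := min (ρ/2) (min (R/2) (min (r₀/2) (min (ε*θ/(4*(|K₀|+1)))
      (min 1 (min (η/(2*(|K₀|+1))) (η/(4*c+1))))))) with hdmd
    have hdm0 : 0 < dm := by
      refine lt_min (by positivity) (lt_min (by positivity) (lt_min (by positivity)
        (lt_min (by positivity) (lt_min one_pos (lt_min (by positivity) (by positivity))))))
    have hdm1 : dm ≤ ρ/2 := min_le_left _ _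
    have hdm2 : dm ≤ R/2 := le_trans (min_le_right _ _) (min_le_left _ _)
    have hdm3 : dm ≤ r₀/2 := le_trans (min_le_right _ _) (le_trans (min_le_right _ _) (min_le_left _ _))
    have hdm4 : dm ≤ ε*θ/(4*(|K₀|+1)) := le_trans (min_le_right _ _) (le_trans (min_le_right _ _)
      (le_trans (min_le_right _ _) (min_le_left _ _)))
    have hdm5 : dm ≤ 1 := le_trans (min_le_right _ _) (le_trans (min_le_right _ _)
      (le_trans (min_le_right _ _) (le_trans (min_le_right _ _) (min_le_left _ _))))
    have hdm6 : dm ≤ η/(2*(|K₀|+1)) := le_trans (min_le_right _ _) (le_trans (min_le_right _ _)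
      (le_trans (min_le_right _ _) (le_trans (min_le_right _ _) (le_trans (min_le_right _ _)
      (min_le_left _ _)))))
    have hdm7 : dm ≤ η/(4*c+1) := le_trans (min_le_right _ _) (le_trans (min_le_right _ _)
      (le_trans (min_le_right _ _) (le_trans (min_le_right _ _) (le_trans (min_le_right _ _)
      (min_le_right _ _)))))
    clear_value dm
    -- pick x
    have hevents : ∀ᶠ z in 𝓝[≠] xbar, dist z xbar < dm ∧ z ≠ xbar := by
      filter_upwards [(Metric.eventually_nhds_iff.mpr
          ⟨dm, hdm0, fun {z} hz => hz⟩ : ∀ᶠ z in 𝓝 xbar, dist z xbar < dm).filter_mono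
          nhdsWithin_le_nhds, eventually_mem_nhdsWithin] with z h1 h2
      exact ⟨h1, h2⟩
    obtain ⟨x, hQx, hxdm, hxne⟩ := (hfreq.and_eventually hevents).exists
    set d : ℝ := dist x xbar with hdd
    have hd0 : 0 < d := dist_pos.mpr hxne
    have hd2 : 0 < d^2 := by positivity
    have hfxt : f x ≠ ⊤ := by
      intro h
      rw [hQtop x hxne h] at hQx
      exact not_top_lt hQx
    set tx : ℝ := (f x).toReal with htxd
    have hfxE : f x = ((tx : ℝ) : EReal) := (EReal.coe_toReal hfxt (hbot x)).symm
    have hQxr : (tx - rfx) * (d^2)⁻¹ < K₀ := by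
      have h := hQx
      rw [hQreal x tx hxne hfxE] at h
      exact_mod_cast h
    have htx : tx - rfx < K₀ * d^2 := by
      rw [← div_eq_mul_inv, div_lt_iff₀ hd2] at hQxr
      linarith only [hQxr]
    by_cases hxM : x ∈ M
    · exact ⟨x, hballU (Metric.mem_ball.mpr (lt_of_lt_of_le hxdm (by linarith only [hdm1, hρ]))),
        le_of_lt (lt_trans hQx hK₀2'), hxM, by simp [hxne]⟩
    · -- Ekeland on the closed ball
      haveI : CompleteSpace (Metric.closedBall xbar R) :=
        Metric.isClosed_closedBall.completeSpace_coe
      set fY : Metric.closedBall xbar R → EReal := fun w => f w.1 with hfYd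
      have hlscY : LowerSemicontinuous fY := LowerSemicontinuous.comp hlsc continuous_subtype_val
      set mlow : ℝ := rfx - c*r₁ with hmlowd
      have hmY : ∀ w : Metric.closedBall xbar R, (mlow : EReal) ≤ fY w := by
        intro w
        have hwlt : dist w.1 xbar < r₁ := lt_of_le_of_lt w.2 (by rw [hRd]; linarith only [hr₁])
        have hlw := hlow hwlt
        by_cases hwt : f w.1 = ⊤
        · show (mlow : EReal) ≤ f w.1
          rw [hwt]; exact le_top
        · set tw : ℝ := (f w.1).toReal with htwd
          have hfwE : f w.1 = ((tw : ℝ) : EReal) := (EReal.coe_toReal hwt (hbot _)).symm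
          rw [hfx, hfwE, ← EReal.coe_add] at hlw
          have hlwr : rfx ≤ tw + c * dist w.1 xbar := by exact_mod_cast hlw
          have hdw : dist w.1 xbar ≤ r₁ := le_of_lt hwlt
          show (mlow : EReal) ≤ f w.1
          rw [hfwE]
          apply EReal.coe_le_coe_iff.mpr
          have hmul := mul_le_mul_of_nonneg_left hdw hc.le
          rw [hmlowd]
          linarith only [hlwr, hmul]
      have hxY : x ∈ Metric.closedBall xbar R :=
        Metric.mem_closedBall.mpr (le_of_lt (lt_of_lt_of_le hxdm (by linarith only [hdm2, hR])))
      obtain ⟨yY, hy1, hy2⟩ := ekeland fY hlscY mlow hmY ε hε ⟨x, hxY⟩ hfxt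
      set y : X := yY.1 with hyd
      have hyball : dist y xbar ≤ R := yY.2
      have hfyt : f y ≠ ⊤ := by
        intro h
        have : fY yY = ⊤ := h
        rw [this, EReal.top_add_coe, top_le_iff] at hy1
        exact hfxt hy1
      set ty : ℝ := (f y).toReal with htyd
      have hfyE : f y = ((ty : ℝ) : EReal) := (EReal.coe_toReal hfyt (hbot y)).symm
      have e1 : ty + ε * dist y x ≤ tx := by
        have h := hy1
        have hdeq : dist yY (⟨x, hxY⟩ : Metric.closedBall xbar R) = dist y x :=
          Subtype.dist_eq yY ⟨x, hxY⟩
        rw [show fY yY = f y from rfl, show fY ⟨x, hxY⟩ = f x from rfl,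
          hfyE, hfxE, hdeq, ← EReal.coe_add] at h
        exact_mod_cast h
      have e2 : rfx ≤ ty + c * dist y xbar := by
        have h := hlow (lt_of_le_of_lt hyball (by rw [hRd]; linarith only [hr₁]))
        rw [hfx, hfyE, ← EReal.coe_add] at h
        exact_mod_cast h
      -- distance estimates
      have hdyxb_le : dist y xbar ≤ dist y x + d := dist_triangle y x xbar
      set dyx : ℝ := dist y x with hdyx
      set Dy : ℝ := dist y xbar with hDy
      clear_value tx ty dyx Dy R mlow d
      have hK₀d : K₀ * d ≤ ε*θ/4 := by
        have hA := mul_le_mul_of_nonneg_right (le_abs_self K₀) hd0.le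
        have hB := mul_le_mul_of_nonneg_left hxdm.le (le_of_lt hK₀abs)
        have hKdm : (|K₀|+1) * dm ≤ ε*θ/4 := by
          have hne : (|K₀|+1) ≠ 0 := ne_of_gt hK₀abs
          have h := mul_le_mul_of_nonneg_left hdm4 hK₀abs.le
          rwa [show (|K₀|+1) * (ε*θ/(4*(|K₀|+1))) = ε*θ/4 by field_simp] at h
        linarith only [hA, hB, hKdm, hd0.le]
      have hdyx0 : 0 ≤ dyx := hdyx ▸ dist_nonneg
      have h4 : dyx ≤ θ * d := by
        have i1 : ε * dyx ≤ K₀*d^2 + c*dyx + c*d := by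
          have hmul := mul_le_mul_of_nonneg_left hdyxb_le hc.le
          linarith only [e1, e2, htx, hmul]
        have hK₀d2 : K₀ * d^2 ≤ (ε*θ/4) * d := by
          have := mul_le_mul_of_nonneg_right hK₀d hd0.le
          linarith only [this]
        have hcd : c * d ≤ (ε*θ/4) * d := by
          have := mul_le_mul_of_nonneg_right hcεθ hd0.le
          linarith only [this]
        have i2 : (ε/2) * dyx ≤ (ε/2) * (θ * d) := by
          have := mul_le_mul_of_nonneg_right hcε2 hdyx0
          linarith only [i1, hK₀d2, hcd, this]
        exact (mul_le_mul_iff_right₀ (by positivity : (0:ℝ) < ε/2)).mp i2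
      have hDlb : (1-θ)*d ≤ Dy := by
        have htri := dist_triangle x y xbar
        rw [dist_comm x y, ← hdyx, ← hDy] at htri
        linarith only [htri, h4, hdd.ge, hdd.le]
      have hDub : Dy ≤ (1+θ)*d := by linarith only [hdyxb_le, h4]
      have hyne : y ≠ xbar := by
        intro h
        rw [h, dist_self] at hDy
        have hd' : (0:ℝ) < (1-θ)*d := mul_pos (by linarith only [hθhalf]) hd0
        linarith only [hDlb, hd', hDy.le]
      have hDpos : 0 < Dy := by rw [hDy]; exact dist_pos.mpr hyne
      have hyR : Dy < R := by
        have h2d := mul_lt_mul_of_pos_right (show (1:ℝ)+θ < 2 by linarith only [hθhalf]) hd0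
        linarith only [hDub, h2d, hxdm, hdm2]
      -- slope bound at y
      have hslopey : slopeM f y ≤ ENNReal.ofReal ε := by
        apply slopeM_le hfyt hε
        rw [Metric.eventually_nhds_iff]
        refine ⟨R - Dy, by linarith only [hyR], fun {z} hz => ?_⟩
        have hzY : z ∈ Metric.closedBall xbar R := by
          rw [Metric.mem_closedBall]
          have htri := dist_triangle z y xbar
          rw [← hDy] at htri
          linarith only [htri, hz, hdyx0]
        have h := hy2 ⟨z, hzY⟩
        have hdeq : dist (⟨z, hzY⟩ : Metric.closedBall xbar R) yY = dist z y :=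
          Subtype.dist_eq _ _
        rwa [show fY yY = f y from rfl, show fY ⟨z, hzY⟩ = f z from rfl, hdeq] at h
      clear_value y
      clear hy1 hy2 hyd yY
      clear_value fY
      clear hmY hlscY hfYd fY
      -- value bounds at y
      have htyub : ty - rfx < K₀ * d^2 := by
        have := mul_nonneg hε.le hdyx0
        linarith only [e1, htx, this]
      have habs : |ty - rfx| < η := by
        rw [abs_lt]
        constructor
        · have ha1 : c * Dy ≤ c * (2*dm) := by
            apply mul_le_mul_of_nonneg_left _ hc.le
            have h1d : (1-θ)*d ≥ 0 := mul_nonneg (by linarith only [hθhalf]) hd0.le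
            linarith only [hDub, hxdm, h1d, hd0]
          have ha2 : c * (2*dm) ≤ 2*c*(η/(4*c+1)) := by
            have := mul_le_mul_of_nonneg_left hdm7 (by positivity : (0:ℝ) ≤ 2*c)
            linarith only [this]
          have ha3 : 2*c*(η/(4*c+1)) < η := by
            rw [show 2*c*(η/(4*c+1)) = (2*c*η)/(4*c+1) by ring, div_lt_iff₀ (by positivity)]
            have := mul_nonneg hc.le hη.le
            linarith only [this, hη]
          linarith only [e2, ha1, ha2, ha3]
        · have h5 : K₀ * d^2 ≤ (|K₀|+1) * (dm * dm) := by
            have ha := mul_le_mul_of_nonneg_right (le_abs_self K₀) (sq_nonneg d)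
            have hdd' : d * d ≤ dm * dm := by
              have := mul_le_mul hxdm.le hxdm.le hd0.le (by linarith only [hxdm, hd0])
              linarith only [this]
            have hb := mul_le_mul_of_nonneg_left hdd' hK₀abs.le
            linarith only [ha, hb, sq_nonneg d]
          have h6 : (|K₀|+1) * (dm*dm) ≤ (|K₀|+1) * ((η/(2*(|K₀|+1))) * 1) := by
            apply mul_le_mul_of_nonneg_left _ (le_of_lt hK₀abs)
            have := mul_le_mul hdm6 hdm5 hdm0.le (by positivity)
            linarith only [this]
          have h7 : (|K₀|+1) * ((η/(2*(|K₀|+1))) * 1) < η := by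
            have hne : (|K₀|+1) ≠ 0 := ne_of_gt hK₀abs
            rw [mul_one, show (|K₀|+1) * (η/(2*(|K₀|+1))) = η/2 by field_simp]
            linarith only [hη]
          linarith only [htyub, h5, h6, h7]
      have hyM : y ∈ M := by
        by_contra hyM
        have h2d' := mul_lt_mul_of_pos_right (show (1:ℝ)+θ < 2 by linarith only [hθhalf]) hd0
        have hlt := hident y ty hyM
          (by rw [← hDy]; linarith only [hDub, h2d', hxdm, hdm3]) hfyE habs
        exact absurd (hlt.trans_le hslopey) (not_lt.mpr hεlt.le)
      -- quotient bound
      have hfinal : ty - rfx ≤ K * Dy^2 := by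
        rcases le_or_gt 0 (ty - rfx) with hp | hn
        · have hK₀pos : 0 < K₀ := by
            by_contra h
            push_neg at h
            have : K₀ * d^2 ≤ 0 := mul_nonpos_of_nonpos_of_nonneg h hd2.le
            linarith only [htyub, hp, this]
          have hKpos : 0 < K := lt_trans hK₀pos hK₀2
          have hsq : ((1-θ)*d)^2 ≤ Dy^2 :=
            pow_le_pow_left₀ (mul_nonneg (by linarith only [hθhalf]) hd0.le) hDlb 2
          have hm1 := mul_le_mul_of_nonneg_right hθ1 hd2.le
          have hm2 := mul_le_mul_of_nonneg_left hsq hKpos.le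
          nlinarith only [htyub, hm1, hm2]
        · rcases le_or_gt 0 K with hKp | hKn
          · have := mul_nonneg hKp (sq_nonneg Dy)
            linarith only [hn, this]
          · have hsq : Dy^2 ≤ ((1+θ)*d)^2 := pow_le_pow_left₀ hDpos.le hDub 2
            have hm1 := mul_le_mul_of_nonneg_right hθ2 hd2.le
            have hm2 := mul_le_mul_of_nonpos_left hsq hKn.le
            nlinarith only [htyub, hm1, hm2]
      refine ⟨y, hballU (Metric.mem_ball.mpr ?_), ?_, hyM, by simp [hyne]⟩
      · have h2d' := mul_lt_mul_of_pos_right (show (1:ℝ)+θ < 2 by linarith only [hθhalf]) hd0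
        rw [← hDy]; linarith only [hDub, h2d', hxdm, hdm1]
      · rw [hQreal y ty hyne hfyE, ← hDy]
        apply EReal.coe_le_coe_iff.mpr
        rw [← div_eq_mul_inv, div_le_iff₀ (pow_pos hDpos 2)]
        exact hfinal
  -- part 1
  have h_easy : Filter.liminf Q (𝓝[≠] xbar) ≤ Filter.liminf Q (𝓝[M \ {xbar}] xbar) :=
    liminf_le_liminf_of_le (nhdsWithin_mono _ (fun z hz => hz.2))
  have h_hard : Filter.liminf Q (𝓝[M \ {xbar}] xbar) ≤ Filter.liminf Q (𝓝[≠] xbar) := by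
    by_contra hcon
    push_neg at hcon
    obtain ⟨K, hK1, hK2⟩ := EReal.exists_between_coe_real hcon
    exact absurd (liminf_le_of_frequently_le (key K hK1)) (not_le.mpr hK2)
  have part1 : Filter.liminf Q (𝓝[≠] xbar) = Filter.liminf Q (𝓝[M \ {xbar}] xbar) :=
    le_antisymm h_easy h_hard
  refine ⟨part1, ?_, ?_⟩
  · rintro ⟨γ, hγ, hgrow⟩
    exact ⟨γ, hγ, hgrow.filter_mono nhdsWithin_le_nhds⟩
  · rintro ⟨γ, hγ, hgrow⟩
    have hlimM : (γ : EReal) ≤ Filter.liminf Q (𝓝[M \ {xbar}] xbar) := by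
      apply le_liminf_of_le (by isBoundedDefault)
      filter_upwards [hgrow.filter_mono (nhdsWithin_mono _ Set.diff_subset),
        eventually_mem_nhdsWithin] with z hz hzmem
      have hzne : z ≠ xbar := hzmem.2
      have hdz : 0 < dist z xbar := dist_pos.mpr hzne
      by_cases hzt : f z = ⊤
      · rw [hQtop z hzne hzt]; exact le_top
      · set tz : ℝ := (f z).toReal with htzd
        have hfzE : f z = ((tz : ℝ) : EReal) := (EReal.coe_toReal hzt (hbot z)).symm
        rw [hQreal z tz hzne hfzE]
        apply EReal.coe_le_coe_iff.mpr
        rw [hfx, hfzE, ← EReal.coe_add] at hz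
        have hzr : rfx + γ * dist z xbar ^ 2 ≤ tz := by exact_mod_cast hz
        rw [← div_eq_mul_inv, le_div_iff₀ (by positivity)]
        linarith
    have hlimfull : ((γ/2 : ℝ) : EReal) < Filter.liminf Q (𝓝[≠] xbar) := by
      rw [part1]
      exact lt_of_lt_of_le (EReal.coe_lt_coe_iff.mpr (by linarith)) hlimM
    have hev2 : ∀ᶠ z in 𝓝[≠] xbar, ((γ/2 : ℝ) : EReal) < Q z :=
      eventually_lt_of_lt_liminf hlimfull
    refine ⟨γ/2, by linarith, ?_⟩
    rw [eventually_nhdsWithin_iff] at hev2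
    filter_upwards [hev2] with z hz
    by_cases hze : z = xbar
    · subst hze
      simp [hfx]
    · have hq := hz (by simpa using hze)
      have hdz : 0 < dist z xbar := dist_pos.mpr hze
      by_cases hzt : f z = ⊤
      · rw [hzt]; exact le_top
      · set tz : ℝ := (f z).toReal with htzd
        have hfzE : f z = ((tz : ℝ) : EReal) := (EReal.coe_toReal hzt (hbot z)).symm
        rw [hQreal z tz hze hfzE] at hq
        have hqr : γ/2 < (tz - rfx) * (dist z xbar ^ 2)⁻¹ := by exact_mod_cast hq
        rw [hfx, hfzE, ← EReal.coe_add]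
        apply EReal.coe_le_coe_iff.mpr
        rw [← div_eq_mul_inv, lt_div_iff₀ (by positivity)] at hqr
        linarith only [hqr]
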